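/- For every positive integer n, the cyclic circulant tournament C⃗_{2n+1}(1,2,…,n) has dichromatic number 2, and every acyclic 2-coloring of it partitions Z_{2n+1} into the two sets {a, a+1, …, a+n} and {a+n+1, a+n+2, …, a−1} for some a ∈ Z_{2n+1}. -/

import Mathlib

/-- A set `S` of vertices induces an acyclic subdigraph of the digraph with
arc relation `A`: there is no directed cycle within `S`. -/
def AcyclicOn {V : Type*} (A : V → V → Prop) (S : Set V) : Prop :=
  ∀ v, ¬ Relation.TransGen (fun x y => x ∈ S ∧ y ∈ S ∧ A x y) v v

/-- An acyclic `k`-coloring: every color class induces an acyclic subdigraph. -/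
def IsAcyclicColoring {V : Type*} (A : V → V → Prop) (k : ℕ) (α : V → Fin k) : Prop :=
  ∀ c : Fin k, AcyclicOn A {v | α v = c}

/-- The `k`-dicoloring graph: vertices are acyclic `k`-colorings, two colorings
adjacent when they differ on exactly one vertex. -/
def DicolGraph {V : Type*} (A : V → V → Prop) (k : ℕ) :
    SimpleGraph {α : V → Fin k // IsAcyclicColoring A k α} where
  Adj α β := ∃! v, α.1 v ≠ β.1 v
  symm := by
    constructor
    rintro α β ⟨v, hv, hu⟩
    exact ⟨v, Ne.symm hv, fun w hw => hu w (Ne.symm hw)⟩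
  loopless := by
    constructor
    rintro α ⟨v, hv, -⟩
    exact hv rfl

/-- The cyclic circulant tournament on `ZMod (2n+1)` with jumps `1,…,n`. -/
def CycArc (n : ℕ) (a b : ZMod (2*n+1)) : Prop := (b - a).val ∈ Finset.Icc 1 n

/-- The tournament obtained from `CycArc n` by reversing the jump `n`. -/
def RevArc (n : ℕ) (a b : ZMod (2*n+1)) : Prop :=
  (b - a).val ∈ Finset.Icc 1 (n-1) ∨ (b - a).val = n + 1

/-- A forbidden triangle in `C_{2n+1}⟨n⟩`. -/
def ForbiddenTriangle (n : ℕ) (S : Set (ZMod (2*n+1))) : Prop :=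
  ∃ i : ZMod (2*n+1), S = {i, i + n, i + n + 1}

lemma acyclicOn_mono {V : Type*} {A : V → V → Prop} {S T : Set V} (hST : S ⊆ T)
    (hT : AcyclicOn A T) : AcyclicOn A S := fun v hv =>
  hT v (Relation.TransGen.mono (fun _ _ h => ⟨hST h.1, hST h.2.1, h.2.2⟩) _ _ hv)

lemma step_lt (n : ℕ) (a x y : ZMod (2*n+1)) (hx : (x - a).val ≤ n)
    (hy : (y - a).val ≤ n) (hA : CycArc n x y) : (x - a).val < (y - a).val := by
  obtain ⟨h1, h2⟩ := Finset.mem_Icc.mp hA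
  have e : y - a = (x - a) + (y - x) := by ring
  have : (y - a).val = (x - a).val + (y - x).val := by
    rw [e, ZMod.val_add, Nat.mod_eq_of_lt (by omega)]
  omega

lemma window_acyclic (n : ℕ) (a : ZMod (2*n+1)) :
    AcyclicOn (CycArc n) {v | (v - a).val ≤ n} := by
  intro v hv
  have key : ∀ y, Relation.TransGen (fun x y => x ∈ {v : ZMod (2*n+1) | (v - a).val ≤ n} ∧
      y ∈ {v : ZMod (2*n+1) | (v - a).val ≤ n} ∧ CycArc n x y) v y →
      (v - a).val < (y - a).val := by
    intro y h
    induction h with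
    | single h => exact step_lt n a _ _ h.1 h.2.1 h.2.2
    | tail _ h ih => exact lt_trans ih (step_lt n a _ _ h.1 h.2.1 h.2.2)
  exact absurd (key v hv) (lt_irrefl _)

lemma acyclic_subset_window (n : ℕ) (S : Set (ZMod (2*n+1)))
    (hS : AcyclicOn (CycArc n) S) : ∃ a, S ⊆ {v | (v - a).val ≤ n} := by
  by_contra hc
  push_neg at hc
  set R := fun x y => x ∈ S ∧ y ∈ S ∧ CycArc n x y with hR
  haveI : IsIrrefl _ (Relation.TransGen R) := ⟨hS⟩
  have wf := Finite.wellFounded_of_trans_of_irrefl (Relation.TransGen R)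
  obtain ⟨v0, hv0, -⟩ := Set.not_subset.mp (hc 0)
  obtain ⟨m, hm, hmin⟩ := wf.has_min S ⟨v0, hv0⟩
  obtain ⟨w, hw, hw2⟩ := Set.not_subset.mp (hc m)
  simp only [Set.mem_setOf_eq, not_le] at hw2
  have hval : (w - m).val < 2*n+1 := ZMod.val_lt _
  have hne : (w - m) ≠ 0 := by
    intro h
    rw [h, ZMod.val_zero] at hw2
    omega
  haveI : NeZero (w - m) := ⟨hne⟩
  have hmw : (m - w).val = 2*n+1 - (w - m).val := by
    have e : m - w = -(w - m) := by ring
    rw [e, ZMod.val_neg_of_ne_zero]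
  have harc : CycArc n w m := Finset.mem_Icc.mpr ⟨by omega, by omega⟩
  exact hmin w hw (Relation.TransGen.single ⟨hw, hm, harc⟩)

lemma window_card (n : ℕ) (a : ZMod (2*n+1)) :
    (Finset.univ.filter (fun v : ZMod (2*n+1) => (v - a).val ≤ n)).card = n + 1 := by
  rw [← Finset.card_range (n+1)]
  symm
  apply Finset.card_bij' (fun (j : ℕ) (_ : j ∈ Finset.range (n+1)) => a + (j : ZMod (2*n+1)))
    (fun v (_ : v ∈ Finset.univ.filter (fun v : ZMod (2*n+1) => (v - a).val ≤ n)) => (v - a).val)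
  · intro j hj
    simp only [Finset.mem_filter, Finset.mem_univ, true_and]
    rw [add_sub_cancel_left, ZMod.val_cast_of_lt (by
      have := Finset.mem_range.mp hj; omega)]
    exact Nat.lt_succ_iff.mp (Finset.mem_range.mp hj)
  · intro v hv
    simp only [Finset.mem_filter] at hv
    exact Finset.mem_range.mpr (Nat.lt_succ_of_le hv.2)
  · intro j hj
    rw [add_sub_cancel_left, ZMod.val_cast_of_lt (by
      have := Finset.mem_range.mp hj; omega)]
  · intro v hv
    rw [ZMod.natCast_rightInverse (v - a)]
    ring

theorem stmt5 (n : ℕ) (hn : 1 ≤ n) :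
    (∃ α : ZMod (2*n+1) → Fin 2, IsAcyclicColoring (CycArc n) 2 α) ∧
    (¬ ∃ α : ZMod (2*n+1) → Fin 1, IsAcyclicColoring (CycArc n) 1 α) ∧
    (∀ α : ZMod (2*n+1) → Fin 2, IsAcyclicColoring (CycArc n) 2 α →
      ∃ (a : ZMod (2*n+1)) (c : Fin 2),
        {v | α v = c} = {v | (v - a).val ≤ n}) := by
  refine ⟨?_, ?_, ?_⟩
  · -- existence
    refine ⟨fun v => if v.val ≤ n then 0 else 1, fun c => ?_⟩
    fin_cases c
    · refine acyclicOn_mono (T := {v : ZMod (2*n+1) | (v - 0).val ≤ n}) ?_ (window_acyclic n 0)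
      intro v hv
      simp only [Set.mem_setOf_eq] at hv ⊢
      rw [sub_zero]
      by_contra h
      rw [if_neg h] at hv
      exact absurd hv (by decide)
    · refine acyclicOn_mono
        (T := {v : ZMod (2*n+1) | (v - ((n+1 : ℕ) : ZMod (2*n+1))).val ≤ n}) ?_
        (window_acyclic n _)
      intro v hv
      simp only [Set.mem_setOf_eq] at hv ⊢
      have hvval : ¬ v.val ≤ n := by
        intro h
        rw [if_pos h] at hv
        exact absurd hv (by decide)
      have hc : ((n+1 : ℕ) : ZMod (2*n+1)).val = n + 1 :=
        ZMod.val_cast_of_lt (by omega)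
      have hvlt : v.val < 2*n+1 := ZMod.val_lt v
      rw [ZMod.val_sub (by omega), hc]
      omega
  · -- no 1-coloring
    rintro ⟨α, hα⟩
    have hmem : ∀ v : ZMod (2*n+1), v ∈ {v | α v = 0} := fun v => Subsingleton.elim _ _
    have A1 : CycArc n 0 ((n : ℕ) : ZMod (2*n+1)) := by
      refine Finset.mem_Icc.mpr ?_
      rw [sub_zero, ZMod.val_cast_of_lt (by omega)]
      omega
    have A2 : CycArc n ((n : ℕ) : ZMod (2*n+1)) ((2*n : ℕ) : ZMod (2*n+1)) := by
      refine Finset.mem_Icc.mpr ?_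
      have e : ((2*n : ℕ) : ZMod (2*n+1)) - ((n : ℕ) : ZMod (2*n+1)) = ((n : ℕ) : ZMod (2*n+1)) := by
        push_cast
        ring
      rw [e, ZMod.val_cast_of_lt (by omega)]
      omega
    have A3 : CycArc n ((2*n : ℕ) : ZMod (2*n+1)) 0 := by
      refine Finset.mem_Icc.mpr ?_
      have h2n : ((2*n : ℕ) : ZMod (2*n+1)).val = 2*n := ZMod.val_cast_of_lt (by omega)
      have hne : ((2*n : ℕ) : ZMod (2*n+1)) ≠ 0 := by
        intro h
        rw [h, ZMod.val_zero] at h2n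
        omega
      haveI : NeZero ((2*n : ℕ) : ZMod (2*n+1)) := ⟨hne⟩
      have e : (0 : ZMod (2*n+1)) - ((2*n : ℕ) : ZMod (2*n+1)) = -((2*n : ℕ) : ZMod (2*n+1)) := by
        ring
      rw [e, ZMod.val_neg_of_ne_zero, h2n]
      omega
    exact hα 0 0 (Relation.TransGen.tail
      (Relation.TransGen.tail (Relation.TransGen.single ⟨hmem _, hmem _, A1⟩)
        ⟨hmem _, hmem _, A2⟩) ⟨hmem _, hmem _, A3⟩)
  · -- uniqueness
    intro α hα
    obtain ⟨a0, h0⟩ := acyclic_subset_window n _ (hα 0)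
    obtain ⟨a1, h1⟩ := acyclic_subset_window n _ (hα 1)
    set F0 := Finset.univ.filter (fun v : ZMod (2*n+1) => α v = 0) with hF0
    set F1 := Finset.univ.filter (fun v : ZMod (2*n+1) => α v = 1) with hF1
    set W0 := Finset.univ.filter (fun v : ZMod (2*n+1) => (v - a0).val ≤ n) with hW0
    set W1 := Finset.univ.filter (fun v : ZMod (2*n+1) => (v - a1).val ≤ n) with hW1
    have hsub0 : F0 ⊆ W0 := by
      intro v hv
      simp only [hF0, hW0, Finset.mem_filter, Finset.mem_univ, true_and] at hv ⊢
      exact h0 hv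
    have hsub1 : F1 ⊆ W1 := by
      intro v hv
      simp only [hF1, hW1, Finset.mem_filter, Finset.mem_univ, true_and] at hv ⊢
      exact h1 hv
    have hc0 : F0.card ≤ n + 1 := by
      have := Finset.card_le_card hsub0
      rw [hW0, window_card] at this
      exact this
    have hc1 : F1.card ≤ n + 1 := by
      have := Finset.card_le_card hsub1
      rw [hW1, window_card] at this
      exact this
    have hsum : F0.card + F1.card = 2*n+1 := by
      have hF1' : F1 = Finset.univ.filter (fun v : ZMod (2*n+1) => ¬ α v = 0) := by
        apply Finset.filter_congr
        intro v _
        constructor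
        · intro h h0'
          rw [h0'] at h
          exact absurd h (by decide)
        · intro h
          omega
      rw [hF1', hF0, Finset.card_filter_add_card_filter_not, Finset.card_univ, ZMod.card]
    rcases (by omega : F0.card = n + 1 ∨ F1.card = n + 1) with h | h
    · refine ⟨a0, 0, ?_⟩
      have heq : F0 = W0 :=
        Finset.eq_of_subset_of_card_le hsub0 (by rw [hW0, window_card, h])
      ext v
      have := Finset.ext_iff.mp heq v
      simp only [hF0, hW0, Finset.mem_filter, Finset.mem_univ, true_and] at this
      simpa using this
    · refine ⟨a1, 1, ?_⟩
      have heq : F1 = W1 :=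
        Finset.eq_of_subset_of_card_le hsub1 (by rw [hW1, window_card, h])
      ext v
      have := Finset.ext_iff.mp heq v
      simp only [hF1, hW1, Finset.mem_filter, Finset.mem_univ, true_and] at this
      simpa using this
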